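/- Let P_1, P_2 be monic real polynomials with all coefficients nonzero, of degrees d_1, d_2. If the constant term of P_1 is positive, then for all sufficiently small epsilon > 0, the coefficient sign sequence of epsilon^{d_2} P_1(x) P_2(x/epsilon) is the sign sequence of P_1 followed by the sign sequence of P_2 with its leading sign omitted. -/

import Mathlib

open Polynomial

lemma coeff_comp_C_mul_X_aux (P : ℝ[X]) (a : ℝ) (n : ℕ) :
    (P.comp (C a * X)).coeff n = P.coeff n * a ^ n := by
  rw [comp_eq_sum_left, Polynomial.sum_def]
  simp only [mul_pow, ← C_pow, finset_sum_coeff, ← mul_assoc, ← C_mul, coeff_C_mul, coeff_X_pow]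
  rw [Finset.sum_eq_single n]
  · simp [mul_comm]
  · intro b _ hb; simp [Ne.symm hb]
  · intro h; simp [Polynomial.notMem_support_iff.mp h]

theorem concatenation_sign_pattern (P₁ P₂ : Polynomial ℝ) (d₁ d₂ : ℕ)
    (hm₁ : P₁.Monic) (hm₂ : P₂.Monic)
    (hd₁ : P₁.natDegree = d₁) (hd₂ : P₂.natDegree = d₂)
    (hnz₁ : ∀ i ≤ d₁, P₁.coeff i ≠ 0) (hnz₂ : ∀ i ≤ d₂, P₂.coeff i ≠ 0)
    (hconst : 0 < P₁.coeff 0) :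
    ∃ ε₀ > (0 : ℝ), ∀ ε : ℝ, 0 < ε → ε < ε₀ →
      let Q : Polynomial ℝ := C (ε ^ d₂) * (P₁ * P₂.comp (C ε⁻¹ * X))
      Q.natDegree = d₁ + d₂ ∧
        (∀ i, d₂ ≤ i → i ≤ d₁ + d₂ → 0 < Q.coeff i * P₁.coeff (i - d₂)) ∧
        (∀ i, i < d₂ → 0 < Q.coeff i * P₂.coeff i) := by
  classical
  set t : ℕ → ℝ := fun i => if i < d₂ then P₂.coeff i else P₁.coeff (i - d₂) with ht
  set H : ℕ → ℝ → ℝ := fun i ε =>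
    ∑ jk ∈ Finset.HasAntidiagonal.antidiagonal i, P₁.coeff jk.1 * P₂.coeff jk.2 * ε ^ (min i d₂ - jk.2) with hH
  have hcont : ∀ i, Continuous (H i) := by
    intro i
    apply continuous_finset_sum
    intro jk _
    exact continuous_const.mul (continuous_pow _)
  -- value at 0
  have hH0 : ∀ i, H i 0 = P₁.coeff (i - min i d₂) * P₂.coeff (min i d₂) := by
    intro i
    have hmem : (i - min i d₂, min i d₂) ∈ Finset.HasAntidiagonal.antidiagonal i := by
      rw [Finset.HasAntidiagonal.mem_antidiagonal]; omega
    simp only [hH]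
    rw [Finset.sum_eq_single_of_mem _ hmem]
    · simp
    · intro jk hjk hne
      rw [Finset.HasAntidiagonal.mem_antidiagonal] at hjk
      rcases lt_trichotomy jk.2 (min i d₂) with h | h | h
      · rw [zero_pow (by omega)]; ring
      · exact absurd (Prod.ext (by omega) h) hne
      · have hd : d₂ < jk.2 := by omega
        have : P₂.coeff jk.2 = 0 := coeff_eq_zero_of_natDegree_lt (by omega)
        simp [this]
  have hB : ∀ i, i ≤ d₁ + d₂ → 0 < H i 0 * t i := by
    intro i hi
    rw [hH0]
    simp only [ht]
    by_cases hlt : i < d₂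
    · rw [if_pos hlt, min_eq_left hlt.le]
      simp only [Nat.sub_self]
      have h2 := hnz₂ i hlt.le
      nlinarith [mul_self_pos.mpr h2]
    · push_neg at hlt
      rw [if_neg (by omega), min_eq_right hlt]
      have : P₂.coeff d₂ = 1 := by rw [← hd₂]; exact hm₂.coeff_natDegree
      rw [this, mul_one]
      exact mul_self_pos.mpr (hnz₁ _ (by omega))
  have hC : ∀ i, ∃ δ > (0:ℝ), ∀ ε : ℝ, |ε| < δ → i ≤ d₁ + d₂ → 0 < H i ε * t i := by
    intro i
    by_cases hi : i ≤ d₁ + d₂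
    · have hf : Continuous (fun ε => H i ε * t i) := (hcont i).mul continuous_const
      have hev : ∀ᶠ ε in nhds (0:ℝ), 0 < H i ε * t i :=
        (hf.tendsto 0).eventually (eventually_gt_nhds (hB i hi))
      rw [Metric.eventually_nhds_iff] at hev
      obtain ⟨δ, hδ0, hδ⟩ := hev
      exact ⟨δ, hδ0, fun ε hε _ => hδ (by simpa [Real.dist_eq] using hε)⟩
    · exact ⟨1, one_pos, fun ε _ h => absurd h hi⟩
  choose δ hδ0 hδ using hC
  refine ⟨(Finset.range (d₁ + d₂ + 1)).inf' ⟨0, by simp⟩ δ, ?_, ?_⟩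
  · refine (Finset.lt_inf'_iff _).mpr ?_
    intro i _
    exact hδ0 i
  intro ε hε hεε₀
  intro Q
  have hQ : Q = C (ε ^ d₂) * (P₁ * P₂.comp (C ε⁻¹ * X)) := rfl
  have hεδ : ∀ i ≤ d₁ + d₂, |ε| < δ i := by
    intro i hi
    rw [abs_of_pos hε]
    exact lt_of_lt_of_le hεε₀ (Finset.inf'_le _ (Finset.mem_range.mpr (by omega)))
  -- key coefficient formula
  have key : ∀ i, Q.coeff i = ε ^ (d₂ - min i d₂) * H i ε := by
    intro i
    rw [hQ, coeff_C_mul, coeff_mul]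
    simp only [coeff_comp_C_mul_X_aux]
    rw [Finset.mul_sum, hH, Finset.mul_sum]
    refine Finset.sum_congr rfl ?_
    intro jk hjk
    rw [Finset.HasAntidiagonal.mem_antidiagonal] at hjk
    by_cases hj : jk.2 ≤ d₂
    · have hj2 : jk.2 ≤ min i d₂ := le_min (by omega) hj
      have hm : min i d₂ ≤ d₂ := min_le_right _ _
      have e1 : ε ^ (d₂ - min i d₂) * ε ^ (min i d₂ - jk.2) = ε ^ (d₂ - jk.2) := by
        rw [← pow_add]; congr 1; omega
      have e2 : ε ^ d₂ * ε⁻¹ ^ jk.2 = ε ^ (d₂ - jk.2) := by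
        have e3 : ε ^ d₂ = ε ^ (d₂ - jk.2) * ε ^ jk.2 := by
          rw [← pow_add]; congr 1; omega
        rw [e3, mul_assoc, ← mul_pow, mul_inv_cancel₀ hε.ne', one_pow, mul_one]
      calc ε ^ d₂ * (P₁.coeff jk.1 * (P₂.coeff jk.2 * ε⁻¹ ^ jk.2))
          = (ε ^ d₂ * ε⁻¹ ^ jk.2) * (P₁.coeff jk.1 * P₂.coeff jk.2) := by ring
        _ = (ε ^ (d₂ - min i d₂) * ε ^ (min i d₂ - jk.2)) *
              (P₁.coeff jk.1 * P₂.coeff jk.2) := by rw [e2, e1]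
        _ = ε ^ (d₂ - min i d₂) * (P₁.coeff jk.1 * P₂.coeff jk.2 * ε ^ (min i d₂ - jk.2)) := by
            ring
    · push_neg at hj
      have : P₂.coeff jk.2 = 0 := coeff_eq_zero_of_natDegree_lt (by omega)
      simp [this]
  have claim2 : ∀ i, d₂ ≤ i → i ≤ d₁ + d₂ → 0 < Q.coeff i * P₁.coeff (i - d₂) := by
    intro i h2 h3
    have := hδ i ε (hεδ i h3) h3
    rw [ht] at this
    simp only [if_neg (by omega : ¬ i < d₂)] at this
    rw [key i, min_eq_right h2, Nat.sub_self, pow_zero, one_mul]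
    exact this
  have claim3 : ∀ i, i < d₂ → 0 < Q.coeff i * P₂.coeff i := by
    intro i hi
    have hile : i ≤ d₁ + d₂ := by omega
    have h := hδ i ε (hεδ i hile) hile
    rw [ht] at h
    simp only [if_pos hi] at h
    rw [key i, min_eq_left hi.le, mul_assoc]
    exact mul_pos (pow_pos hε _) h
  refine ⟨?_, claim2, claim3⟩
  have hQle : Q.natDegree ≤ d₁ + d₂ := by
    rw [hQ]
    refine natDegree_mul_le.trans ?_
    simp only [natDegree_C, zero_add]
    refine natDegree_mul_le.trans ?_
    refine add_le_add hd₁.le ?_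
    refine natDegree_comp_le.trans ?_
    calc P₂.natDegree * (C ε⁻¹ * X).natDegree ≤ d₂ * 1 := by
          refine Nat.mul_le_mul hd₂.le ?_
          exact (natDegree_C_mul_le _ _).trans (by simp)
      _ = d₂ := by omega
  have hne : Q.coeff (d₁ + d₂) ≠ 0 := by
    intro h
    have := claim2 (d₁ + d₂) (by omega) le_rfl
    rw [h, zero_mul] at this
    exact lt_irrefl 0 this
  exact le_antisymm hQle (le_natDegree_of_ne_zero hne)
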